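/- There do not exist six points u, p₁,...,p₅ in ℝ², each lying on the x-axis or the y-axis, such that dist(u,pᵢ) ≤ 2 for all i and dist(pᵢ,pⱼ) > 2 for all i ≠ j. (The 5-star K_{1,5} cannot be realized as a unit disk graph on two perpendicular lines.) -/

import Mathlib

private lemma three_in_window (m a b c : ℝ) (ha : |a - m| ≤ 2) (hb : |b - m| ≤ 2)
    (hc : |c - m| ≤ 2) (hab : 2 < |a - b|) (hbc : 2 < |b - c|) (hac : 2 < |a - c|) :
    False := by
  rcases abs_le.mp ha with ⟨ha1, ha2⟩
  rcases abs_le.mp hb with ⟨hb1, hb2⟩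
  rcases abs_le.mp hc with ⟨hc1, hc2⟩
  rcases lt_abs.mp hab with h1 | h1 <;> rcases lt_abs.mp hbc with h2 | h2 <;>
    rcases lt_abs.mp hac with h3 | h3 <;> linarith

private lemma exists_three {α : Type*} [DecidableEq α] (s : Finset α) (h : 3 ≤ s.card) :
    ∃ a b c, a ∈ s ∧ b ∈ s ∧ c ∈ s ∧ a ≠ b ∧ a ≠ c ∧ b ≠ c := by
  obtain ⟨a, ha⟩ := Finset.card_pos.mp (by omega : 0 < s.card)
  have h2 : 2 ≤ (s.erase a).card := by rw [Finset.card_erase_of_mem ha]; omega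
  obtain ⟨b, hb⟩ := Finset.card_pos.mp (by omega : 0 < (s.erase a).card)
  have h1 : 1 ≤ ((s.erase a).erase b).card := by rw [Finset.card_erase_of_mem hb]; omega
  obtain ⟨c, hc⟩ := Finset.card_pos.mp (by omega : 0 < ((s.erase a).erase b).card)
  obtain ⟨hba, hbs⟩ := Finset.mem_erase.mp hb
  obtain ⟨hcb, hc'⟩ := Finset.mem_erase.mp hc
  obtain ⟨hca, hcs⟩ := Finset.mem_erase.mp hc'
  exact ⟨a, b, c, ha, hbs, hcs, Ne.symm hba, Ne.symm hca, Ne.symm hcb⟩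

/-- The star `K_{1,5}` cannot be realized as a unit disk graph on two
perpendicular lines: there are no points `u, p₁, …, p₅`, each on the x-axis or
the y-axis, with `dist u pᵢ ≤ 2` for all `i` and `dist pᵢ pⱼ > 2` for `i ≠ j`. -/
theorem stmt_5 :
    ¬ ∃ (u : ℂ) (p : Fin 5 → ℂ),
      (u.im = 0 ∨ u.re = 0) ∧
      (∀ i, (p i).im = 0 ∨ (p i).re = 0) ∧
      (∀ i, dist u (p i) ≤ 2) ∧
      (∀ i j : Fin 5, i ≠ j → dist (p i) (p j) > 2) := by
  rintro ⟨u, p, _, hax, hclose, hfar⟩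
  classical
  -- coordinate bounds
  have hre : ∀ i, |(p i).re - u.re| ≤ 2 := by
    intro i
    have h1 : |(p i - u).re| ≤ ‖p i - u‖ := Complex.abs_re_le_norm _
    have h2 : ‖p i - u‖ = dist u (p i) := by
      rw [dist_comm, Complex.dist_eq]
    rw [Complex.sub_re] at h1
    calc |(p i).re - u.re| ≤ ‖p i - u‖ := h1
      _ ≤ 2 := by rw [h2]; exact hclose i
  have him : ∀ i, |(p i).im - u.im| ≤ 2 := by
    intro i
    have h1 : |(p i - u).im| ≤ ‖p i - u‖ := Complex.abs_im_le_norm _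
    have h2 : ‖p i - u‖ = dist u (p i) := by
      rw [dist_comm, Complex.dist_eq]
    rw [Complex.sub_im] at h1
    calc |(p i).im - u.im| ≤ ‖p i - u‖ := h1
      _ ≤ 2 := by rw [h2]; exact hclose i
  -- distance on a common axis
  have dre : ∀ i j, (p i).im = 0 → (p j).im = 0 → dist (p i) (p j) = |(p i).re - (p j).re| := by
    intro i j hi hj
    rw [Complex.dist_eq_re_im, hi, hj]
    simp [Real.sqrt_sq_eq_abs]
  have dim : ∀ i j, (p i).re = 0 → (p j).re = 0 → dist (p i) (p j) = |(p i).im - (p j).im| := by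
    intro i j hi hj
    rw [Complex.dist_eq_re_im, hi, hj]
    simp [Real.sqrt_sq_eq_abs]
  set s : Finset (Fin 5) := Finset.univ.filter (fun i => (p i).im = 0) with hs
  have hcard : s.card + sᶜ.card = 5 := by
    rw [Finset.card_add_card_compl]; simp
  rcases (by omega : 3 ≤ s.card ∨ 3 ≤ sᶜ.card) with h3 | h3
  · obtain ⟨a, b, c, ha, hb, hc, hab, hac, hbc⟩ := exists_three s h3
    have ma : (p a).im = 0 := (Finset.mem_filter.mp ha).2
    have mb : (p b).im = 0 := (Finset.mem_filter.mp hb).2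
    have mc : (p c).im = 0 := (Finset.mem_filter.mp hc).2
    refine three_in_window u.re (p a).re (p b).re (p c).re (hre a) (hre b) (hre c) ?_ ?_ ?_
    · rw [← dre a b ma mb]; exact hfar a b hab
    · rw [← dre b c mb mc]; exact hfar b c hbc
    · rw [← dre a c ma mc]; exact hfar a c hac
  · obtain ⟨a, b, c, ha, hb, hc, hab, hac, hbc⟩ := exists_three sᶜ h3
    have ma : (p a).re = 0 := by
      have h' : ¬ (p a).im = 0 := by simpa [hs] using Finset.mem_compl.mp ha
      exact (hax a).resolve_left h'
    have mb : (p b).re = 0 := by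
      have h' : ¬ (p b).im = 0 := by simpa [hs] using Finset.mem_compl.mp hb
      exact (hax b).resolve_left h'
    have mc : (p c).re = 0 := by
      have h' : ¬ (p c).im = 0 := by simpa [hs] using Finset.mem_compl.mp hc
      exact (hax c).resolve_left h'
    refine three_in_window u.im (p a).im (p b).im (p c).im (him a) (him b) (him c) ?_ ?_ ?_
    · rw [← dim a b ma mb]; exact hfar a b hab
    · rw [← dim b c mb mc]; exact hfar b c hbc
    · rw [← dim a c ma mc]; exact hfar a c hac
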